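/- Let q = 2, n ∈ ℕ, and S ⊆ {0,1,...,n−1} with S nonempty and S ≠ {0,1,...,n−1}. Then the indicator function δ_S : Z/(2^n−1)Z → F_2 of Ω(S) has maximum least period 2^n − 1. -/

import Mathlib

/-- `inOmega q n w j` : `j` is a sum of `w` distinct `q`-powers `q^i` with `0 ≤ i ≤ n-1`. -/
def inOmega (q n w j : ℕ) : Prop :=
  ∃ s : Finset (Fin n), s.card = w ∧ j = ∑ i ∈ s, q ^ (i : ℕ)

open scoped Classical in
/-- The indicator function `δ_S : ℤ/(qⁿ-1)ℤ → 𝔽_p` of `Ω(S) = ⋃_{w ∈ S} Ω(w)`. -/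
noncomputable def deltaS (p q n : ℕ) (S : Finset ℕ) (k : ZMod (q ^ n - 1)) : ZMod p :=
  if ∃ w ∈ S, inOmega q n w k.val then 1 else 0

/-- `f : ℤ/Nℤ → α` is `r`-periodic if `f(i + r) = f(i)` for all `i`. -/
def IsPeriodicZMod {N : ℕ} {α : Type*} (f : ZMod N → α) (r : ℕ) : Prop :=
  ∀ i : ZMod N, f (i + (r : ZMod N)) = f i

/-- The least period of `f : ℤ/Nℤ → α`. -/
noncomputable def leastPeriod {N : ℕ} {α : Type*} (f : ZMod N → α) : ℕ :=
  sInf {r : ℕ | 0 < r ∧ IsPeriodicZMod f r}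

namespace DeltaMaxAux

open Finset

/-- value of a finite set of bit positions -/
def V (s : Finset ℕ) : ℕ := ∑ i ∈ s, 2 ^ i

/-- the bit set of `x` among positions `< n` -/
def bset (n x : ℕ) : Finset ℕ := (Finset.range n).filter (fun i => x.testBit i)

/-- binary weight of `x` (restricted to `n` bits) -/
def wt (n x : ℕ) : ℕ := (bset n x).card

lemma sum_ite_testBit (m x : ℕ) :
    (∑ i ∈ Finset.range m, if x.testBit i then 2 ^ i else 0) = x % 2 ^ m := by
  induction m with
  | zero => simp [Nat.mod_one]
  | succ m ih =>
    rw [Finset.sum_range_succ, ih]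
    have h2 : (2:ℕ) ^ (m+1) = 2 ^ m * 2 := by ring
    rw [h2, Nat.mod_mul]
    have ht : x.testBit m = decide (x / 2 ^ m % 2 = 1) := Nat.testBit_eq_decide_div_mod_eq
    have hlt : x / 2 ^ m % 2 < 2 := Nat.mod_lt _ (by norm_num)
    by_cases hb : x.testBit m
    · have : x / 2 ^ m % 2 = 1 := by
        have := hb
        rw [ht] at this
        simpa using this
      simp [hb, this, Nat.mul_comm]
    · have : x / 2 ^ m % 2 = 0 := by
        have := hb
        rw [ht] at this
        simp at this
        omega
      simp [hb, this]

lemma V_bset (m x : ℕ) : V (bset m x) = x % 2 ^ m := by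
  rw [V, bset, Finset.sum_filter, sum_ite_testBit]

lemma V_bset_of_lt {m x : ℕ} (h : x < 2 ^ m) : V (bset m x) = x := by
  rw [V_bset, Nat.mod_eq_of_lt h]

lemma bset_subset (m x : ℕ) : bset m x ⊆ Finset.range m := Finset.filter_subset _ _

lemma V_range (m : ℕ) : V (Finset.range m) = 2 ^ m - 1 := by
  induction m with
  | zero => simp [V]
  | succ m ih =>
    rw [V, Finset.sum_range_succ, ← V, ih]
    have : (1:ℕ) ≤ 2 ^ m := Nat.one_le_two_pow
    have h2 : (2:ℕ) ^ (m+1) = 2 ^ m + 2 ^ m := by ring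
    omega

lemma V_le {m : ℕ} {s : Finset ℕ} (h : s ⊆ Finset.range m) : V s ≤ 2 ^ m - 1 := by
  calc V s ≤ V (Finset.range m) := Finset.sum_le_sum_of_subset h
  _ = 2 ^ m - 1 := V_range m

lemma V_lt_pow {m : ℕ} {s : Finset ℕ} (h : s ⊆ Finset.range m) : V s < 2 ^ m := by
  have := V_le h
  have : (1:ℕ) ≤ 2 ^ m := Nat.one_le_two_pow
  omega

lemma V_lt_of_ne {m : ℕ} {s : Finset ℕ} (h : s ⊆ Finset.range m) (hne : s ≠ Finset.range m) :
    V s < 2 ^ m - 1 := by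
  have hss : s ⊂ Finset.range m := Finset.ssubset_iff_subset_ne.mpr ⟨h, hne⟩
  obtain ⟨i, hi, his⟩ := Finset.exists_of_ssubset hss
  have : V s < V (Finset.range m) :=
    Finset.sum_lt_sum_of_subset h hi his (pow_pos (by norm_num) _)
      (fun j _ _ => Nat.zero_le _)
  rwa [V_range] at this

/-- uniqueness of binary representation -/
lemma V_injOn {m : ℕ} {s t : Finset ℕ} (hs : s ⊆ Finset.range m) (ht : t ⊆ Finset.range m)
    (h : V s = V t) : s = t := by
  classical
  -- injectivity via surjectivity and cardinality on the powerset
  have key : ∀ ⦃a₁ : Finset ℕ⦄ (_ : a₁ ∈ (Finset.range m).powerset)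
      ⦃a₂ : Finset ℕ⦄ (_ : a₂ ∈ (Finset.range m).powerset),
      V a₁ = V a₂ → a₁ = a₂ := by
    have := Finset.inj_on_of_surj_on_of_card_le
      (s := (Finset.range m).powerset) (t := Finset.range (2 ^ m))
      (fun a _ => V a)
      (fun a ha => by
        simp only [Finset.mem_range]
        exact V_lt_pow (Finset.mem_powerset.mp ha))
      (fun b hb => by
        refine ⟨bset m b, Finset.mem_powerset.mpr (bset_subset m b), ?_⟩
        exact V_bset_of_lt (Finset.mem_range.mp hb))
      (by rw [Finset.card_powerset, Finset.card_range, Finset.card_range])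
    intro a₁ h₁ a₂ h₂ hV
    exact this h₁ h₂ hV
  exact key (Finset.mem_powerset.mpr hs) (Finset.mem_powerset.mpr ht) h

lemma wt_V {n : ℕ} {s : Finset ℕ} (hs : s ⊆ Finset.range n) : wt n (V s) = s.card := by
  have h1 : V (bset n (V s)) = V s := V_bset_of_lt (V_lt_pow hs)
  have h2 : bset n (V s) = s := V_injOn (bset_subset _ _) hs h1
  rw [wt, h2]


/-- cyclic rotation of bit positions by one, within `n` bits -/
def rot1 (n i : ℕ) : ℕ := if i = n - 1 then 0 else i + 1

lemma rot1_lt {n i : ℕ} (hn : 1 ≤ n) (hi : i < n) : rot1 n i < n := by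
  unfold rot1
  split <;> omega

lemma rot1_injOn {n : ℕ} {s : Finset ℕ} (hs : s ⊆ Finset.range n) :
    ∀ x ∈ s, ∀ y ∈ s, rot1 n x = rot1 n y → x = y := by
  intro x hx y hy hxy
  have hx' : x < n := Finset.mem_range.mp (hs hx)
  have hy' : y < n := Finset.mem_range.mp (hs hy)
  unfold rot1 at hxy
  split at hxy <;> split at hxy <;> omega

lemma rot1_image_subset {n : ℕ} {s : Finset ℕ} (hn : 1 ≤ n) (hs : s ⊆ Finset.range n) :
    s.image (rot1 n) ⊆ Finset.range n := by
  intro j hj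
  obtain ⟨i, hi, rfl⟩ := Finset.mem_image.mp hj
  exact Finset.mem_range.mpr (rot1_lt hn (Finset.mem_range.mp (hs hi)))

lemma card_image_rot1 {n : ℕ} {s : Finset ℕ} (hs : s ⊆ Finset.range n) :
    (s.image (rot1 n)).card = s.card :=
  Finset.card_image_of_injOn (rot1_injOn hs)

/-- rotating a multiple of `d` (where `d ∣ 2^n - 1`) stays a multiple of `d` -/
lemma dvd_V_rot1 {n d : ℕ} (hn : 1 ≤ n) (hdN : d ∣ 2 ^ n - 1) {s : Finset ℕ}
    (hs : s ⊆ Finset.range n) (hdv : d ∣ V s) : d ∣ V (s.image (rot1 n)) := by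
  classical
  have hsum : V (s.image (rot1 n)) = ∑ i ∈ s, 2 ^ (rot1 n i) :=
    Finset.sum_image (rot1_injOn hs)
  by_cases htop : n - 1 ∈ s
  · -- top bit wraps : 2 * V s = V (image) + (2^n - 1)
    have hV : V s = 2 ^ (n-1) + V (s.erase (n-1)) := (Finset.add_sum_erase s _ htop).symm
    have himg : ∑ i ∈ s, 2 ^ (rot1 n i)
        = 2 ^ 0 + ∑ i ∈ s.erase (n-1), 2 ^ (rot1 n i) := by
      rw [← Finset.add_sum_erase s (fun i => 2 ^ (rot1 n i)) htop]
      simp [rot1]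
    have herase : ∑ i ∈ s.erase (n-1), 2 ^ (rot1 n i)
        = ∑ i ∈ s.erase (n-1), 2 ^ (i + 1) := by
      apply Finset.sum_congr rfl
      intro i hi
      have : i ≠ n - 1 := Finset.ne_of_mem_erase hi
      simp [rot1, this]
    have h2 : ∑ i ∈ s.erase (n-1), 2 ^ (i+1) = 2 * ∑ i ∈ s.erase (n-1), 2 ^ i := by
      rw [Finset.mul_sum]
      apply Finset.sum_congr rfl
      intro i _
      ring
    have hpow : 2 ^ (n - 1) * 2 = 2 ^ n := by
      have : n - 1 + 1 = n := by omega
      rw [← pow_succ, this]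
    have hkey : 2 * V s = V (s.image (rot1 n)) + (2 ^ n - 1) := by
      rw [hsum, himg, herase, h2, hV]
      have h1 : (1:ℕ) ≤ 2 ^ n := Nat.one_le_two_pow
      unfold V
      omega
    have hd2 : d ∣ 2 * V s := Dvd.dvd.mul_left hdv 2
    have heq : V (s.image (rot1 n)) = 2 * V s - (2 ^ n - 1) := by omega
    rw [heq]
    exact Nat.dvd_sub hd2 hdN
  · -- no wrap : V (image) = 2 * V s
    have herase : ∑ i ∈ s, 2 ^ (rot1 n i) = ∑ i ∈ s, 2 ^ (i + 1) := by
      apply Finset.sum_congr rfl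
      intro i hi
      have : i ≠ n - 1 := fun h => htop (h ▸ hi)
      simp [rot1, this]
    have h2 : ∑ i ∈ s, 2 ^ (i+1) = 2 * V s := by
      rw [V, Finset.mul_sum]
      apply Finset.sum_congr rfl
      intro i _
      ring
    rw [hsum, herase, h2]
    exact Dvd.dvd.mul_left hdv 2


/-- we can rotate a multiple of `d` to clear the top bit -/
lemma exists_rotated (n d : ℕ) (hn : 1 ≤ n) (hdN : d ∣ 2 ^ n - 1) :
    ∀ (k : ℕ) (s : Finset ℕ), s ⊆ Finset.range n → d ∣ V s →
    (∃ i, i < n ∧ i ∉ s ∧ n - 1 - i ≤ k) →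
    ∃ t, t ⊆ Finset.range n ∧ t.card = s.card ∧ d ∣ V t ∧ n - 1 ∉ t := by
  intro k
  induction k with
  | zero =>
    intro s hs hdv ⟨i, hi, his, hik⟩
    have : i = n - 1 := by omega
    exact ⟨s, hs, rfl, hdv, this ▸ his⟩
  | succ k ih =>
    intro s hs hdv ⟨i, hi, his, hik⟩
    by_cases htop : n - 1 ∈ s
    · have hine : i ≠ n - 1 := fun h => his (h ▸ htop)
      have hi1 : i + 1 < n := by omega
      refine ih (s.image (rot1 n)) (rot1_image_subset hn hs) (dvd_V_rot1 hn hdN hs hdv) ?_ |>.imp ?_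
      · refine ⟨i + 1, hi1, ?_, by omega⟩
        intro hmem
        obtain ⟨j, hj, hji⟩ := Finset.mem_image.mp hmem
        unfold rot1 at hji
        split at hji
        · omega
        · have : j = i := by omega
          exact his (this ▸ hj)
      · intro t ⟨h1, h2, h3, h4⟩
        exact ⟨h1, h2.trans (card_image_rot1 hs), h3, h4⟩
    · exact ⟨s, hs, rfl, hdv, htop⟩


theorem core (n d : ℕ) (hn : 2 ≤ n) (hdvd : d ∣ 2 ^ n - 1) (hd0 : 0 < d)
    (hdN : d < 2 ^ n - 1) (χ : ℕ → Prop)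
    (hper : ∀ a : ℕ, a + d < 2 ^ n - 1 → (χ (wt n (a + d)) ↔ χ (wt n a))) :
    ∀ v, v < n → (χ v ↔ χ 0) := by
  classical
  have hN1 : (1:ℕ) ≤ 2 ^ n := Nat.one_le_two_pow
  -- iterate periodicity
  have aux : ∀ (t a : ℕ), a + t * d < 2 ^ n - 1 → (χ (wt n (a + t * d)) ↔ χ (wt n a)) := by
    intro t
    induction t with
    | zero => intro a _; simp
    | succ t ih =>
      intro a ha
      have h1 : a + (t + 1) * d = (a + t * d) + d := by ring
      have h2 : (a + t * d) + d < 2 ^ n - 1 := by omega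
      have h3 : a + t * d < 2 ^ n - 1 := by omega
      rw [h1]
      exact (hper (a + t * d) h2).trans (ih a h3)
  have link : ∀ (x M : ℕ), d ∣ M → x + M < 2 ^ n - 1 → (χ (wt n (x + M)) ↔ χ (wt n x)) := by
    intro x M hM hlt
    obtain ⟨t, rfl⟩ := hM
    rw [mul_comm] at hlt ⊢
    exact aux t x hlt
  -- the base multiple σ₀
  have hdlt : d < 2 ^ n := by omega
  set sd : Finset ℕ := bset n d with hsd
  have hsdr : sd ⊆ Finset.range n := bset_subset n d
  have hVsd : V sd = d := V_bset_of_lt hdlt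
  have hc1 : 1 ≤ sd.card := by
    rcases Nat.eq_zero_or_pos sd.card with h | h
    · exfalso
      have : sd = ∅ := Finset.card_eq_zero.mp h
      rw [this] at hVsd
      simp [V] at hVsd
      omega
    · exact h
  have hcn : sd.card ≤ n - 1 := by
    by_contra hcon
    push_neg at hcon
    have hle : sd.card ≤ n := by
      calc sd.card ≤ (Finset.range n).card := Finset.card_le_card hsdr
      _ = n := Finset.card_range n
    have hceq : sd.card = n := by omega
    have : sd = Finset.range n := by
      apply Finset.eq_of_subset_of_card_le hsdr
      rw [Finset.card_range, hceq]
    rw [this, V_range] at hVsd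
    omega
  -- choose σ₀ : sd or its complement, with weight ≤ n/2
  obtain ⟨σ₀, hσ₀r, hσ₀dvd, hσ₀c1, hσ₀c2, hσ₀cn⟩ :
      ∃ σ₀ : Finset ℕ, σ₀ ⊆ Finset.range n ∧ d ∣ V σ₀ ∧ 1 ≤ σ₀.card ∧
        2 * σ₀.card ≤ n ∧ σ₀.card ≤ n - 1 := by
    by_cases hc : 2 * sd.card ≤ n
    · exact ⟨sd, hsdr, hVsd ▸ dvd_refl d, hc1, hc, hcn⟩
    · refine ⟨Finset.range n \ sd, Finset.sdiff_subset, ?_, ?_, ?_, ?_⟩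
      · have hsum : V (Finset.range n \ sd) + V sd = V (Finset.range n) :=
          Finset.sum_sdiff hsdr
        rw [V_range, hVsd] at hsum
        have : V (Finset.range n \ sd) = (2 ^ n - 1) - d := by omega
        rw [this]
        exact Nat.dvd_sub hdvd (dvd_refl d)
      all_goals
        rw [Finset.card_sdiff_of_subset hsdr, Finset.card_range]
        omega
  -- rotate to clear top bit
  have hi₀ : ∃ i, i < n ∧ i ∉ σ₀ ∧ n - 1 - i ≤ n - 1 := by
    have hne : σ₀ ≠ Finset.range n := by
      intro h
      rw [h, Finset.card_range] at hσ₀cn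
      omega
    obtain ⟨i, hi, his⟩ := Finset.exists_of_ssubset (Finset.ssubset_iff_subset_ne.mpr ⟨hσ₀r, hne⟩)
    exact ⟨i, Finset.mem_range.mp hi, his, by omega⟩
  obtain ⟨σ, hσr, hσcard, hσdvd, hσtop⟩ :=
    exists_rotated n d (by omega) hdvd (n - 1) σ₀ hσ₀r hσ₀dvd hi₀
  set c : ℕ := σ.card with hc
  have hc1' : 1 ≤ c := by omega
  have hc2' : 2 * c ≤ n := by omega
  have hcn' : c ≤ n - 1 := by omega
  -- top element b
  have hσne : σ.Nonempty := Finset.card_pos.mp (by omega)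
  set b : ℕ := σ.max' hσne with hb
  have hbmem : b ∈ σ := σ.max'_mem hσne
  have hbn : b < n := Finset.mem_range.mp (hσr hbmem)
  have hbne : b ≠ n - 1 := fun h => hσtop (h ▸ hbmem)
  have hb1n : b + 1 < n := by omega
  have hb1σ : b + 1 ∉ σ := by
    intro h
    have := σ.le_max' _ h
    omega
  -- L1
  have L1 : ∀ a, a + c ≤ n - 1 → (χ a ↔ χ (a + c)) := by
    intro a ha
    have hcards : (Finset.range n \ σ).card = n - c := by
      rw [Finset.card_sdiff_of_subset hσr, Finset.card_range]
    obtain ⟨F, hFsub, hFcard⟩ := Finset.exists_subset_card_eq (s := Finset.range n \ σ) (n := a)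
      (by rw [hcards]; omega)
    have hFr : F ⊆ Finset.range n := hFsub.trans Finset.sdiff_subset
    have hdisj : Disjoint F σ := by
      rw [Finset.disjoint_left]
      intro i hiF hiσ
      exact (Finset.mem_sdiff.mp (hFsub hiF)).2 hiσ
    have hur : F ∪ σ ⊆ Finset.range n := Finset.union_subset hFr hσr
    have hucard : (F ∪ σ).card = a + c := by
      rw [Finset.card_union_of_disjoint hdisj, hFcard]
    have hune : F ∪ σ ≠ Finset.range n := by
      intro h
      have := congrArg Finset.card h
      rw [hucard, Finset.card_range] at this
      omega
    have hVu : V (F ∪ σ) = V F + V σ := Finset.sum_union hdisj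
    have hlt : V F + V σ < 2 ^ n - 1 := hVu ▸ V_lt_of_ne hur hune
    have hl := link (V F) (V σ) hσdvd hlt
    have h1 : wt n (V F + V σ) = a + c := by
      rw [← hVu, wt_V hur, hucard]
    have h2 : wt n (V F) = a := by rw [wt_V hFr, hFcard]
    rw [h1, h2] at hl
    exact hl.symm
  -- L2
  have L2 : ∀ j, j + c ≤ n - 1 → (χ (j + 1) ↔ χ (c + j)) := by
    intro j hj
    have hins_sub : insert (b + 1) σ ⊆ Finset.range n :=
      Finset.insert_subset (Finset.mem_range.mpr hb1n) hσr
    have hins_card : (insert (b + 1) σ).card = c + 1 := by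
      rw [Finset.card_insert_of_notMem hb1σ]
    have hcards : (Finset.range n \ insert (b + 1) σ).card = n - (c + 1) := by
      rw [Finset.card_sdiff_of_subset hins_sub, Finset.card_range, hins_card]
    obtain ⟨F, hFsub, hFcard⟩ := Finset.exists_subset_card_eq
      (s := Finset.range n \ insert (b + 1) σ) (n := j) (by rw [hcards]; omega)
    have hFr : F ⊆ Finset.range n := hFsub.trans Finset.sdiff_subset
    have hFins : ∀ i ∈ F, i ∉ insert (b + 1) σ := fun i hi =>
      (Finset.mem_sdiff.mp (hFsub hi)).2
    have hFσ : Disjoint F σ := by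
      rw [Finset.disjoint_left]
      intro i hiF hiσ
      exact hFins i hiF (Finset.mem_insert_of_mem hiσ)
    have hbF : b ∉ F := by
      intro h
      exact hFins b h (Finset.mem_insert_of_mem hbmem)
    have hb1F : b + 1 ∉ F := by
      intro h
      exact hFins (b + 1) h (Finset.mem_insert_self _ _)
    -- x set
    set X : Finset ℕ := insert b F with hX
    have hXr : X ⊆ Finset.range n := Finset.insert_subset (Finset.mem_range.mpr hbn) hFr
    have hXcard : X.card = j + 1 := by
      rw [hX, Finset.card_insert_of_notMem hbF, hFcard]
    have hVX : V X = 2 ^ b + V F := Finset.sum_insert hbF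
    -- y set
    set E : Finset ℕ := σ.erase b with hE
    have hEσ : E ⊆ σ := Finset.erase_subset _ _
    have hEcard : E.card = c - 1 := by rw [hE, Finset.card_erase_of_mem hbmem]
    have hEF : Disjoint E F := by
      rw [Finset.disjoint_left]
      intro i hiE hiF
      exact (Finset.disjoint_left.mp hFσ) hiF (hEσ hiE)
    have hb1EF : b + 1 ∉ E ∪ F := by
      intro h
      rcases Finset.mem_union.mp h with h | h
      · exact hb1σ (hEσ h)
      · exact hb1F h
    set Y : Finset ℕ := insert (b + 1) (E ∪ F) with hY
    have hYr : Y ⊆ Finset.range n := by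
      apply Finset.insert_subset (Finset.mem_range.mpr hb1n)
      exact Finset.union_subset (hEσ.trans hσr) hFr
    have hYcard : Y.card = c + j := by
      rw [hY, Finset.card_insert_of_notMem hb1EF, Finset.card_union_of_disjoint hEF,
        hEcard, hFcard]
      omega
    have hYne : Y ≠ Finset.range n := by
      intro h
      have := congrArg Finset.card h
      rw [hYcard, Finset.card_range] at this
      omega
    -- value identity : V Y = V X + V σ
    have hVσE : 2 ^ b + V E = V σ := Finset.add_sum_erase σ (fun i => 2 ^ i) hbmem
    have hVY : V Y = 2 ^ (b + 1) + (V E + V F) := by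
      rw [hY, V, Finset.sum_insert hb1EF, Finset.sum_union hEF]
      rfl
    have hpow : (2:ℕ) ^ (b + 1) = 2 ^ b + 2 ^ b := by ring
    have hVYX : V Y = V X + V σ := by
      rw [hVY, hVX, ← hVσE, hpow]
      ring
    have hlt : V X + V σ < 2 ^ n - 1 := hVYX ▸ V_lt_of_ne hYr hYne
    have hl := link (V X) (V σ) hσdvd hlt
    have h1 : wt n (V X + V σ) = c + j := by rw [← hVYX, wt_V hYr, hYcard]
    have h2 : wt n (V X) = j + 1 := by rw [wt_V hXr, hXcard]
    rw [h1, h2] at hl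
    exact hl.symm
  -- step and chain
  have step : ∀ v, v + 1 ≤ n - c → (χ v ↔ χ (v + 1)) := by
    intro v hv
    have hva : v + c ≤ n - 1 := by omega
    have h1 := L1 v hva
    have h2 := L2 v hva
    rw [Nat.add_comm c v] at h2
    exact h1.trans h2.symm
  have chain : ∀ v, v ≤ n - c → (χ v ↔ χ 0) := by
    intro v
    induction v with
    | zero => intro _; rfl
    | succ v ih =>
      intro hv
      exact (step v hv).symm.trans (ih (by omega))
  -- conclude
  intro v hv
  by_cases hcase : v ≤ n - c
  · exact chain v hcase
  · have hvc : c ≤ v := by omega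
    have ha : (v - c) + c ≤ n - 1 := by omega
    have h1 := L1 (v - c) ha
    have h2 : v - c + c = v := by omega
    rw [h2] at h1
    exact h1.symm.trans (chain (v - c) (by omega))


/-- bridge between `inOmega`-existence and the weight function -/
lemma bridge (n : ℕ) (S : Finset ℕ) (x : ℕ) (hx : x < 2 ^ n) :
    (∃ w ∈ S, inOmega 2 n w x) ↔ wt n x ∈ S := by
  constructor
  · rintro ⟨w, hwS, s, hcard, hsum⟩
    have hinj : ∀ i ∈ s, ∀ j ∈ s, (i : Fin n).val = (j : Fin n).val → i = j :=
      fun i _ j _ h => Fin.val_injective h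
    have hVs : V (s.image Fin.val) = x := by
      rw [V, Finset.sum_image hinj, hsum]
    have hsub : s.image Fin.val ⊆ Finset.range n := by
      intro m hm
      obtain ⟨i, _, rfl⟩ := Finset.mem_image.mp hm
      exact Finset.mem_range.mpr i.isLt
    have hcard' : (s.image Fin.val).card = w := by
      rw [Finset.card_image_of_injective s Fin.val_injective, hcard]
    have : wt n x = w := by rw [← hVs, wt_V hsub, hcard']
    rwa [this]
  · intro h
    refine ⟨wt n x, h, ?_⟩
    have hlt : ∀ m ∈ bset n x, m < n := fun m hm => Finset.mem_range.mp (bset_subset n x hm)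
    refine ⟨(bset n x).attachFin hlt, Finset.card_attachFin _ _, ?_⟩
    have himg : ((bset n x).attachFin hlt).image Fin.val = bset n x := by
      ext m
      simp only [Finset.mem_image]
      constructor
      · rintro ⟨i, hi, rfl⟩
        exact (Finset.mem_attachFin hlt).mp hi
      · intro hm
        exact ⟨⟨m, hlt m hm⟩, (Finset.mem_attachFin hlt).mpr hm, rfl⟩
    have hs : ∑ i ∈ (bset n x).attachFin hlt, 2 ^ (i : ℕ)
        = ∑ m ∈ ((bset n x).attachFin hlt).image Fin.val, 2 ^ m :=
      (Finset.sum_image (fun i _ j _ h => Fin.val_injective h)).symm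
    have hx' : ∑ i ∈ (bset n x).attachFin hlt, 2 ^ (i : ℕ) = x := by
      rw [hs, himg]
      exact V_bset_of_lt hx
    exact hx'.symm


end DeltaMaxAux

open DeltaMaxAux in
theorem delta_max_period_two (n : ℕ) (S : Finset ℕ) (hS : S.Nonempty)
    (hSn : S ⊆ Finset.range n) (hSne : S ≠ Finset.range n) :
    leastPeriod (deltaS 2 2 n S) = 2 ^ n - 1 := by
  classical
  -- basic facts about n
  obtain ⟨u₀, hu₀⟩ := hS
  have hu₀n : u₀ < n := Finset.mem_range.mp (hSn hu₀)
  have hn1 : 1 ≤ n := by omega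
  have hn : 2 ≤ n := by
    rcases Nat.lt_or_ge n 2 with h | h
    · exfalso
      have hn1' : n = 1 := by omega
      subst hn1'
      apply hSne
      have : S ⊆ {0} := by rwa [Finset.range_one] at hSn
      rw [Finset.range_one]
      exact (Finset.Nonempty.subset_singleton_iff (⟨u₀, hu₀⟩ : S.Nonempty)).mp this
    · exact h
  set N : ℕ := 2 ^ n - 1 with hNdef
  have hN3 : 3 ≤ N := by
    have : (4:ℕ) ≤ 2 ^ n := by
      calc (4:ℕ) = 2 ^ 2 := by norm_num
      _ ≤ 2 ^ n := Nat.pow_le_pow_right (by norm_num) hn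
    omega
  haveI : NeZero N := ⟨by omega⟩
  haveI : NeZero (2 ^ n - 1) := ⟨by omega⟩
  set f : ZMod (2 ^ n - 1) → ZMod 2 := deltaS 2 2 n S with hf
  -- existence of an excluded weight
  have hSS : S ⊂ Finset.range n := Finset.ssubset_iff_subset_ne.mpr ⟨hSn, hSne⟩
  obtain ⟨v₀, hv₀r, hv₀S⟩ := Finset.exists_of_ssubset hSS
  have hv₀n : v₀ < n := Finset.mem_range.mp hv₀r
  -- f computed by weight
  have hval : ∀ a : ℕ, a < N → f (a : ZMod (2 ^ n - 1)) = if wt n a ∈ S then 1 else 0 := by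
    intro a ha
    have hav : ((a : ZMod (2 ^ n - 1))).val = a := ZMod.val_natCast_of_lt (by omega)
    rw [hf, deltaS]
    have ha2 : a < 2 ^ n := by omega
    rw [hav]
    by_cases h : wt n a ∈ S
    · rw [if_pos ((bridge n S a ha2).mpr h), if_pos h]
    · rw [if_neg (fun hc => h ((bridge n S a ha2).mp hc)), if_neg h]
  -- N is a period
  have hperN : IsPeriodicZMod f N := by
    intro i
    have : ((N : ℕ) : ZMod (2 ^ n - 1)) = 0 := by
      rw [hNdef]
      exact ZMod.natCast_self _
    rw [this, add_zero]
  -- no smaller period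
  have hmain : ∀ r, 0 < r → IsPeriodicZMod f r → N ≤ r := by
    intro r hr hper
    by_contra hcon
    push_neg at hcon
    -- periodicity for multiples of r
    have pm : ∀ (k : ℕ) (i : ZMod (2 ^ n - 1)), f (i + ((k * r : ℕ) : ZMod (2 ^ n - 1))) = f i := by
      intro k
      induction k with
      | zero => intro i; simp
      | succ k ih =>
        intro i
        have h1 : ((k + 1) * r : ℕ) = (k * r) + r := by ring
        rw [h1, Nat.cast_add, ← add_assoc]
        rw [hper (i + ((k * r : ℕ) : ZMod (2 ^ n - 1)))]
        exact ih i
    -- gcd is a period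
    set d : ℕ := Nat.gcd r N with hd
    have hd0 : 0 < d := Nat.gcd_pos_of_pos_left N hr
    have hdr : d ≤ r := Nat.gcd_le_left N hr
    have hdN : d < N := by omega
    have hddvd : d ∣ N := Nat.gcd_dvd_right r N
    -- Bezout
    have hbez : ((d : ℕ) : ZMod (2 ^ n - 1)) = ((r : ℕ) : ZMod (2 ^ n - 1)) * ((Nat.gcdA r N : ℤ) : ZMod (2 ^ n - 1)) := by
      have h := Nat.gcd_eq_gcd_ab r N
      have h2 : ((Nat.gcd r N : ℤ) : ZMod (2 ^ n - 1)) = ((r * Nat.gcdA r N + N * Nat.gcdB r N : ℤ) : ZMod (2 ^ n - 1)) := by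
        exact_mod_cast congrArg (fun z : ℤ => (z : ZMod (2 ^ n - 1))) h
      push_cast at h2
      have hN0 : ((N : ℕ) : ZMod (2 ^ n - 1)) = 0 := by
        rw [hNdef]; exact ZMod.natCast_self _
      rw [hN0] at h2
      simpa using h2
    set A : ZMod (2 ^ n - 1) := ((Nat.gcdA r N : ℤ) : ZMod (2 ^ n - 1)) with hA
    have hAval : ((A.val : ℕ) : ZMod (2 ^ n - 1)) = A := ZMod.natCast_rightInverse A
    have hdcast : ((d : ℕ) : ZMod (2 ^ n - 1)) = ((A.val * r : ℕ) : ZMod (2 ^ n - 1)) := by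
      rw [Nat.cast_mul, hAval, hbez]
      ring
    have hperd : ∀ i : ZMod (2 ^ n - 1), f (i + ((d : ℕ) : ZMod (2 ^ n - 1))) = f i := by
      intro i
      rw [hdcast]
      exact pm A.val i
    -- consistency for χ := (· ∈ S)
    have hper' : ∀ a : ℕ, a + d < 2 ^ n - 1 →
        ((wt n (a + d) ∈ S) ↔ (wt n a ∈ S)) := by
      intro a ha
      have haN : a < N := by omega
      have h1 : f ((a : ZMod (2 ^ n - 1)) + ((d : ℕ) : ZMod (2 ^ n - 1))) = f (a : ZMod (2 ^ n - 1)) :=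
        hperd (a : ZMod (2 ^ n - 1))
      have h2 : ((a : ZMod (2 ^ n - 1)) + ((d : ℕ) : ZMod (2 ^ n - 1))) = ((a + d : ℕ) : ZMod (2 ^ n - 1)) := by
        push_cast
        ring
      rw [h2, hval (a + d) (by omega), hval a haN] at h1
      by_cases hx : wt n (a + d) ∈ S <;> by_cases hy : wt n a ∈ S
      · exact ⟨fun _ => hy, fun _ => hx⟩
      · exfalso
        rw [if_pos hx, if_neg hy] at h1
        exact one_ne_zero h1
      · exfalso
        rw [if_neg hx, if_pos hy] at h1
        exact one_ne_zero h1.symm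
      · exact ⟨fun h => absurd h hx, fun h => absurd h hy⟩
    -- connectivity gives a contradiction
    have hcore := core n d hn (hNdef ▸ hddvd) hd0 (hNdef ▸ hdN) (fun v => v ∈ S) hper'
    have h1 : (u₀ ∈ S) ↔ (0 ∈ S) := hcore u₀ hu₀n
    have h2 : (v₀ ∈ S) ↔ (0 ∈ S) := hcore v₀ hv₀n
    exact hv₀S (h2.mpr (h1.mp hu₀))
  -- conclude
  rw [leastPeriod]
  apply le_antisymm
  · exact Nat.sInf_le ⟨by omega, hperN⟩
  · exact le_csInf ⟨N, by omega, hperN⟩ (fun b hb => hmain b hb.1 hb.2)
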